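/- arXiv:2103.16035 — 3 statements merged into one kernel-verified Lean document; each statement's English description precedes it below -/
import Mathlib

section
/- Let Σ be a symmetric positive definite p×p matrix and θ > 0. The map η_θ(v) = argmin_{β} { (1/2)(β−v)ᵀΣ(β−v) + θ‖β‖₁ } is well-defined (the minimizer exists and is unique) and is Lipschitz continuous in v with Lipschitz constant at most κ(Σ)^{1/2} = (λ_max(Σ)/λ_min(Σ))^{1/2} (in particular, it is Lipschitz). -/
open Matrix

private noncomputable def stObj {p : ℕ} (S : Matrix (Fin p) (Fin p) ℝ) (θ : ℝ)
    (v β : Fin p → ℝ) : ℝ :=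
  (1/2) * ((β - v) ⬝ᵥ S.mulVec (β - v)) + θ * ∑ j, |β j|

/-- The generalized soft-thresholding operator `η_θ` is well defined (unique minimizer) and
Lipschitz with constant `√(λmax/λmin)` in the Euclidean norm. -/
theorem soft_thresholding_lipschitz {p : ℕ} (S : Matrix (Fin p) (Fin p) ℝ) (hS : S.PosDef)
    (θ lmin lmax : ℝ) (hθ : 0 < θ) (hlmin : 0 < lmin)
    (hbound : ∀ x : Fin p → ℝ,
      lmin * (∑ j, x j ^ 2) ≤ x ⬝ᵥ S.mulVec x ∧ x ⬝ᵥ S.mulVec x ≤ lmax * (∑ j, x j ^ 2)) :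
    ∃ η : (Fin p → ℝ) → (Fin p → ℝ),
      (∀ v, IsMinOn (fun β : Fin p → ℝ =>
          (1/2) * ((β - v) ⬝ᵥ S.mulVec (β - v)) + θ * ∑ j, |β j|) Set.univ (η v)) ∧
      (∀ v b, IsMinOn (fun β : Fin p → ℝ =>
          (1/2) * ((β - v) ⬝ᵥ S.mulVec (β - v)) + θ * ∑ j, |β j|) Set.univ b → b = η v) ∧
      (∀ v w, Real.sqrt (∑ j, (η v j - η w j)^2) ≤
          Real.sqrt (lmax / lmin) * Real.sqrt (∑ j, (v j - w j)^2)) := by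
  classical
  -- the statement's objective is `stObj S θ v`
  have hFeq : ∀ v : Fin p → ℝ, (fun β : Fin p → ℝ =>
      (1/2) * ((β - v) ⬝ᵥ S.mulVec (β - v)) + θ * ∑ j, |β j|) = stObj S θ v := by
    intro v; funext β; rfl
  -- symmetry of the bilinear form
  have hsymm : ∀ x y : Fin p → ℝ, x ⬝ᵥ S.mulVec y = y ⬝ᵥ S.mulVec x := by
    intro x y
    rw [Matrix.dotProduct_mulVec, ← Matrix.mulVec_transpose,
      show Sᵀ = S from hS.isHermitian.eq, dotProduct_comm]
  -- nonnegativity of the quadratic form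
  have hQ0 : ∀ x : Fin p → ℝ, 0 ≤ x ⬝ᵥ S.mulVec x := by
    intro x
    have h1 := (hbound x).1
    have h2 : 0 ≤ ∑ j, x j ^ 2 := Finset.sum_nonneg fun j _ => sq_nonneg _
    nlinarith
  -- expansion of the quadratic form
  have hexp : ∀ x y : Fin p → ℝ, (x + y) ⬝ᵥ S.mulVec (x + y) =
      x ⬝ᵥ S.mulVec x + 2 * (x ⬝ᵥ S.mulVec y) + y ⬝ᵥ S.mulVec y := by
    intro x y
    rw [Matrix.mulVec_add, dotProduct_add, add_dotProduct, add_dotProduct, hsymm y x]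
    ring
  -- continuity
  have hcont : ∀ v, Continuous (stObj S θ v) := by
    intro v
    apply Continuous.add
    · exact continuous_const.mul
        (((continuous_id.sub continuous_const)).dotProduct
          (continuous_const.matrix_mulVec (continuous_id.sub continuous_const)))
    · exact continuous_const.mul
        (continuous_finset_sum _ fun j _ => (continuous_apply j).abs)
  -- existence of a global minimizer
  have hexist : ∀ v, ∃ b, IsMinOn (stObj S θ v) Set.univ b := by
    intro v
    have hR0 : (0:ℝ) ≤ ∑ j, |v j| := Finset.sum_nonneg fun j _ => abs_nonneg _
    have hvmem : v ∈ Metric.closedBall (0 : Fin p → ℝ) (∑ j, |v j|) := by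
      rw [Metric.mem_closedBall, dist_zero_right, pi_norm_le_iff_of_nonneg hR0]
      intro i
      rw [Real.norm_eq_abs]
      exact Finset.single_le_sum (fun j _ => abs_nonneg (v j)) (Finset.mem_univ i)
    obtain ⟨b, hbmem, hbmin⟩ :=
      (isCompact_closedBall (0 : Fin p → ℝ) (∑ j, |v j|)).exists_isMinOn
      ⟨v, hvmem⟩ (hcont v).continuousOn
    refine ⟨b, ?_⟩
    rw [isMinOn_iff]
    intro β _
    by_cases hmem : β ∈ Metric.closedBall (0 : Fin p → ℝ) (∑ j, |v j|)
    · exact isMinOn_iff.mp hbmin β hmem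
    · have h1 : (∑ j, |v j|) < ‖β‖ := by
        rw [Metric.mem_closedBall, dist_zero_right, not_le] at hmem
        exact hmem
      have hsum0 : (0:ℝ) ≤ ∑ j, |β j| := Finset.sum_nonneg fun j _ => abs_nonneg _
      have h2 : ‖β‖ ≤ ∑ j, |β j| := by
        rw [pi_norm_le_iff_of_nonneg hsum0]
        intro i
        rw [Real.norm_eq_abs]
        exact Finset.single_le_sum (fun j _ => abs_nonneg (β j)) (Finset.mem_univ i)
      have hFvv : stObj S θ v v = θ * ∑ j, |v j| := by
        simp [stObj]
      have hFb : stObj S θ v b ≤ θ * ∑ j, |v j| := hFvv ▸ isMinOn_iff.mp hbmin v hvmem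
      have hFβ : θ * ∑ j, |β j| ≤ stObj S θ v β := by
        have := hQ0 (β - v)
        simp only [stObj]
        nlinarith
      have : θ * ∑ j, |v j| < θ * ∑ j, |β j| :=
        mul_lt_mul_of_pos_left (lt_of_lt_of_le h1 h2) hθ
      linarith
  -- strong minimality inequality
  have hstrong : ∀ v b, IsMinOn (stObj S θ v) Set.univ b → ∀ c,
      stObj S θ v b + (1/2) * ((c - b) ⬝ᵥ S.mulVec (c - b)) ≤ stObj S θ v c := by
    intro v b hb c
    have hDnn : 0 ≤ (c - b) ⬝ᵥ S.mulVec (c - b) := hQ0 _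
    -- key inequality for all t ∈ (0,1]
    have hkey : ∀ t : ℝ, 0 < t → t ≤ 1 →
        0 ≤ t * ((b - v) ⬝ᵥ S.mulVec (c - b) + θ * ((∑ j, |c j|) - ∑ j, |b j|))
          + t^2 / 2 * ((c - b) ⬝ᵥ S.mulVec (c - b)) := by
      intro t ht0 ht1
      have hmin := isMinOn_iff.mp hb (b + t • (c - b)) (Set.mem_univ _)
      have hquad : (b + t • (c - b) - v) ⬝ᵥ S.mulVec (b + t • (c - b) - v) =
          (b - v) ⬝ᵥ S.mulVec (b - v) + 2 * t * ((b - v) ⬝ᵥ S.mulVec (c - b))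
            + t^2 * ((c - b) ⬝ᵥ S.mulVec (c - b)) := by
        have he : b + t • (c - b) - v = (b - v) + t • (c - b) := by module
        rw [he, hexp (b - v) (t • (c - b))]
        rw [Matrix.mulVec_smul, dotProduct_smul, smul_dotProduct, dotProduct_smul]
        simp only [smul_eq_mul]
        ring
      have habs : ∑ j, |b j + t * (c j - b j)| ≤
          (1 - t) * (∑ j, |b j|) + t * (∑ j, |c j|) := by
        rw [Finset.mul_sum, Finset.mul_sum, ← Finset.sum_add_distrib]
        refine Finset.sum_le_sum fun j _ => ?_
        have h : b j + t * (c j - b j) = (1 - t) * b j + t * c j := by ring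
        rw [h]
        calc |(1 - t) * b j + t * c j| ≤ |(1 - t) * b j| + |t * c j| := abs_add_le _ _
        _ = (1 - t) * |b j| + t * |c j| := by
            rw [abs_mul, abs_mul, abs_of_nonneg (by linarith), abs_of_nonneg ht0.le]
      have hFbt : stObj S θ v (b + t • (c - b)) =
          (1/2) * ((b + t • (c - b) - v) ⬝ᵥ S.mulVec (b + t • (c - b) - v))
          + θ * ∑ j, |b j + t * (c j - b j)| := by
        simp [stObj, smul_eq_mul, mul_sub]
      have habs' : θ * ∑ j, |b j + t * (c j - b j)| ≤
          θ * ((1 - t) * (∑ j, |b j|) + t * (∑ j, |c j|)) :=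
        mul_le_mul_of_nonneg_left habs hθ.le
      have hstep : stObj S θ v (b + t • (c - b)) ≤ stObj S θ v b
          + t * ((b - v) ⬝ᵥ S.mulVec (c - b) + θ * ((∑ j, |c j|) - ∑ j, |b j|))
          + t^2 / 2 * ((c - b) ⬝ᵥ S.mulVec (c - b)) := by
        rw [hFbt, hquad]
        simp only [stObj]
        nlinarith
      linarith
    -- deduce 0 ≤ A
    have hAnn : 0 ≤ (b - v) ⬝ᵥ S.mulVec (c - b) + θ * ((∑ j, |c j|) - ∑ j, |b j|) := by
      set A : ℝ := (b - v) ⬝ᵥ S.mulVec (c - b) + θ * ((∑ j, |c j|) - ∑ j, |b j|) with hA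
      set D : ℝ := (c - b) ⬝ᵥ S.mulVec (c - b) with hD
      clear_value A D
      by_contra hA0
      push_neg at hA0
      have ht0pos : 0 < min 1 ((-A) / (D + 1)) :=
        lt_min one_pos (div_pos (by linarith) (by linarith))
      have ht0le1 : min 1 ((-A) / (D + 1)) ≤ 1 := min_le_left _ _
      have hmul : (min 1 ((-A) / (D + 1))) * (D + 1) ≤ -A := by
        rw [← le_div_iff₀ (by linarith : (0:ℝ) < D + 1)]
        exact min_le_right _ _
      have hk := hkey (min 1 ((-A) / (D + 1))) ht0pos ht0le1
      nlinarith [mul_le_mul_of_nonneg_left hmul ht0pos.le, mul_pos ht0pos ht0pos]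
    -- conclude
    have hFc : stObj S θ v c = stObj S θ v b
        + ((b - v) ⬝ᵥ S.mulVec (c - b) + θ * ((∑ j, |c j|) - ∑ j, |b j|))
        + (1/2) * ((c - b) ⬝ᵥ S.mulVec (c - b)) := by
      have he : c - v = (b - v) + (c - b) := by module
      simp only [stObj]
      rw [he, hexp (b - v) (c - b)]
      ring
    rw [hFc]
    linarith
  -- choose the minimizer
  choose η hη using hexist
  have huniq : ∀ v b, IsMinOn (stObj S θ v) Set.univ b → b = η v := by
    intro v b hb
    have h1 := hstrong v (η v) (hη v) b
    have h2 : stObj S θ v b ≤ stObj S θ v (η v) := isMinOn_iff.mp hb (η v) (Set.mem_univ _)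
    have h4 : (b - η v) ⬝ᵥ S.mulVec (b - η v) ≤ 0 := by linarith
    have h5 := (hbound (b - η v)).1
    have h6 : ∑ j, (b - η v) j ^ 2 ≤ 0 := by nlinarith
    funext j
    have hle : (b - η v) j ^ 2 ≤ 0 := by
      have := Finset.single_le_sum (fun i (_ : i ∈ Finset.univ) => sq_nonneg ((b - η v) i))
        (Finset.mem_univ j)
      linarith
    have h7 : (b - η v) j ^ 2 = 0 := le_antisymm hle (sq_nonneg _)
    have h8 : (b - η v) j = 0 := by
      exact pow_eq_zero_iff (n := 2) (by norm_num) |>.mp h7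
    have h9 : b j - η v j = 0 := h8
    linarith
  refine ⟨η, ?_, ?_, ?_⟩
  · intro v; rw [hFeq v]; exact hη v
  · intro v b hb; exact huniq v b (by rwa [hFeq v] at hb)
  -- Lipschitz bound
  intro v w
  by_cases hvw : v = w
  · subst hvw
    simp
  · have h1 := hstrong v (η v) (hη v) (η w)
    have h2 := hstrong w (η w) (hη w) (η v)
    -- identity:  F v c + F w b - F v b - F w c = d ⬝ᵥ S e  where b = η v, c = η w
    have hQneg : ∀ x : Fin p → ℝ, (-x) ⬝ᵥ S.mulVec (-x) = x ⬝ᵥ S.mulVec x := by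
      intro x
      rw [Matrix.mulVec_neg, dotProduct_neg, neg_dotProduct, neg_neg]
    have hQswap : (η w - η v) ⬝ᵥ S.mulVec (η w - η v)
        = (η v - η w) ⬝ᵥ S.mulVec (η v - η w) := by
      rw [show η w - η v = -(η v - η w) by module, hQneg]
    have hiden : stObj S θ v (η w) + stObj S θ w (η v)
        - stObj S θ v (η v) - stObj S θ w (η w)
        = (η v - η w) ⬝ᵥ S.mulVec (v - w) := by
      have e1 : η w - v = (η w - w) + (-(v - w)) := by module
      have e2 : η v - w = (η v - v) + (v - w) := by module
      have q1 : (η w - v) ⬝ᵥ S.mulVec (η w - v) = (η w - w) ⬝ᵥ S.mulVec (η w - w)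
          + 2 * ((η w - w) ⬝ᵥ S.mulVec (-(v - w))) + (-(v - w)) ⬝ᵥ S.mulVec (-(v - w)) := by
        rw [e1]; exact hexp _ _
      have q2 : (η v - w) ⬝ᵥ S.mulVec (η v - w) = (η v - v) ⬝ᵥ S.mulVec (η v - v)
          + 2 * ((η v - v) ⬝ᵥ S.mulVec (v - w)) + (v - w) ⬝ᵥ S.mulVec (v - w) := by
        rw [e2]; exact hexp _ _
      have q3 : (η w - w) ⬝ᵥ S.mulVec (-(v - w)) = -((η w - w) ⬝ᵥ S.mulVec (v - w)) := by
        rw [Matrix.mulVec_neg, dotProduct_neg]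
      have q4 : (-(v - w)) ⬝ᵥ S.mulVec (-(v - w)) = (v - w) ⬝ᵥ S.mulVec (v - w) := hQneg _
      have q7 : (η v - η w) ⬝ᵥ S.mulVec (v - w) =
          (η v - v) ⬝ᵥ S.mulVec (v - w) - (η w - w) ⬝ᵥ S.mulVec (v - w)
          + (v - w) ⬝ᵥ S.mulVec (v - w) := by
        rw [show η v - η w = ((η v - v) - (η w - w)) + (v - w) by module,
          add_dotProduct, sub_dotProduct]
      simp only [stObj]
      rw [q7, q1, q2, q3, q4]
      ring
    -- Q d ≤ B d e
    have hQd_le : (η v - η w) ⬝ᵥ S.mulVec (η v - η w)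
        ≤ (η v - η w) ⬝ᵥ S.mulVec (v - w) := by
      rw [show (η w : Fin p → ℝ) - η v = -(η v - η w) by module, hQneg] at h1
      linarith
    -- Q d ≤ Q e
    have hQde : (η v - η w) ⬝ᵥ S.mulVec (η v - η w) ≤ (v - w) ⬝ᵥ S.mulVec (v - w) := by
      have hQsub : 0 ≤ ((v - w) - (η v - η w)) ⬝ᵥ S.mulVec ((v - w) - (η v - η w)) := hQ0 _
      have hexp2 : ((v - w) - (η v - η w)) ⬝ᵥ S.mulVec ((v - w) - (η v - η w))
          = (v - w) ⬝ᵥ S.mulVec (v - w) - 2 * ((η v - η w) ⬝ᵥ S.mulVec (v - w))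
            + (η v - η w) ⬝ᵥ S.mulVec (η v - η w) := by
        rw [show (v - w) - (η v - η w) = (v - w) + (-(η v - η w)) by module,
          hexp (v - w) (-(η v - η w))]
        simp only [Matrix.mulVec_neg, dotProduct_neg, neg_dotProduct, neg_neg]
        rw [hsymm (v - w) (η v - η w)]
        ring
      nlinarith
    -- eigenvalue bounds
    have hld := (hbound (η v - η w)).1
    have hle2 := (hbound (v - w)).2
    have hepos : 0 < ∑ j, (v - w) j ^ 2 := by
      have hne : v - w ≠ 0 := sub_ne_zero_of_ne hvw
      obtain ⟨j, hj⟩ : ∃ j, (v - w) j ≠ 0 := by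
        by_contra hall
        push_neg at hall
        exact hne (funext hall)
      have hpos : 0 < (v - w) j ^ 2 := by positivity
      have hnn : ∀ i ∈ Finset.univ, (0:ℝ) ≤ (v - w) i ^ 2 := fun i _ => sq_nonneg _
      calc (0:ℝ) < (v - w) j ^ 2 := hpos
      _ ≤ ∑ i, (v - w) i ^ 2 := Finset.single_le_sum hnn (Finset.mem_univ j)
    have hlmax : lmin ≤ lmax := by
      have ha := (hbound (v - w)).1
      have hb := (hbound (v - w)).2
      nlinarith
    have hfrac : 0 ≤ lmax / lmin := div_nonneg (by linarith) hlmin.le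
    have hmain : ∑ j, (η v - η w) j ^ 2 ≤ (lmax / lmin) * ∑ j, (v - w) j ^ 2 := by
      rw [div_mul_eq_mul_div, le_div_iff₀ hlmin]
      nlinarith
    have hdj : ∀ j, (η v - η w) j = η v j - η w j := fun j => rfl
    have hej : ∀ j, (v - w) j = v j - w j := fun j => rfl
    calc Real.sqrt (∑ j, (η v j - η w j)^2)
        = Real.sqrt (∑ j, (η v - η w) j ^ 2) := by
          congr 1
    _ ≤ Real.sqrt ((lmax / lmin) * ∑ j, (v - w) j ^ 2) := Real.sqrt_le_sqrt hmain
    _ = Real.sqrt (lmax / lmin) * Real.sqrt (∑ j, (v - w) j ^ 2) := Real.sqrt_mul hfrac _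
    _ = Real.sqrt (lmax / lmin) * Real.sqrt (∑ j, (v j - w j)^2) := by
          congr 1
end

section
/- Let β⋆ ∈ ℝ^p, X ∈ ℝ^{n×p}, y ∈ ℝ^n, λ > 0, θ > 0, ω ∈ ℝ with λ = θ(1−ω). Suppose there exists v ∈ ∂‖β⋆‖₁ (the subdifferential of the ℓ¹ norm at β⋆) such that Xᵀz⋆ = θ·v where (1−ω)·z⋆ = y − X·β⋆. Then β⋆ is a global minimizer of the LASSO cost C(β) = (1/2)‖y − Xβ‖² + λ‖β‖₁. -/
open Matrix

/-- Any AMP fixed point with the subgradient certificate is a global LASSO minimizer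
with calibrated `λ = θ(1-ω)`. -/
theorem amp_fixed_point_is_lasso_minimizer {n p : ℕ}
    (X : Matrix (Fin n) (Fin p) ℝ) (y : Fin n → ℝ)
    (βs : Fin p → ℝ) (zs : Fin n → ℝ) (v : Fin p → ℝ)
    (lam θ ω : ℝ) (hlam : 0 < lam) (hθ : 0 < θ) (hcal : lam = θ * (1 - ω))
    (hv : ∀ j, (βs j ≠ 0 → v j = Real.sign (βs j)) ∧ |v j| ≤ 1)
    (hz : (1 - ω) • zs = y - X.mulVec βs)
    (hkkt : Xᵀ.mulVec zs = θ • v) :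
    ∀ β : Fin p → ℝ,
      (1/2) * (∑ i, (y i - X.mulVec βs i)^2) + lam * ∑ j, |βs j| ≤
      (1/2) * (∑ i, (y i - X.mulVec β i)^2) + lam * ∑ j, |β j| := by
  intro β
  set r : Fin n → ℝ := y - X.mulVec βs with hr
  set w : Fin p → ℝ := βs - β with hw
  set d : Fin n → ℝ := X.mulVec w with hd
  have hXr : Xᵀ.mulVec r = lam • v := by
    rw [← hz, Matrix.mulVec_smul, hkkt, smul_smul, hcal, mul_comm]
  -- inner product identity
  have key : ∑ i, r i * d i = lam * ∑ j, v j * w j := by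
    have h1 : r ⬝ᵥ X.mulVec w = Xᵀ.mulVec r ⬝ᵥ w := by
      rw [Matrix.mulVec_transpose, Matrix.dotProduct_mulVec]
    rw [hXr] at h1
    simpa [dotProduct, Finset.mul_sum, mul_assoc, hd] using h1
  have expand : ∀ i, y i - X.mulVec β i = r i + d i := by
    intro i
    simp [hr, hd, hw, Matrix.mulVec_sub, Pi.sub_apply]
  have hsq : ∑ i, (y i - X.mulVec β i)^2
      = ∑ i, (r i)^2 + 2*(∑ i, r i * d i) + ∑ i, (d i)^2 := by
    simp_rw [expand, add_sq]
    rw [Finset.sum_add_distrib, Finset.sum_add_distrib, Finset.mul_sum]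
    ring_nf
  have hsupp : ∑ j, v j * βs j = ∑ j, |βs j| := by
    refine Finset.sum_congr rfl (fun j _ => ?_)
    rcases eq_or_ne (βs j) 0 with h | h
    · simp [h]
    · rw [(hv j).1 h]
      rcases lt_or_gt_of_ne h with hneg | hpos
      · rw [Real.sign_of_neg hneg, abs_of_neg hneg]; ring
      · rw [Real.sign_of_pos hpos, abs_of_pos hpos]; ring
  have hβbound : ∑ j, v j * β j ≤ ∑ j, |β j| := by
    refine Finset.sum_le_sum (fun j _ => ?_)
    calc v j * β j ≤ |v j * β j| := le_abs_self _
      _ = |v j| * |β j| := abs_mul _ _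
      _ ≤ 1 * |β j| := mul_le_mul_of_nonneg_right (hv j).2 (abs_nonneg _)
      _ = |β j| := one_mul _
  have hd2 : (0:ℝ) ≤ ∑ i, (d i)^2 := Finset.sum_nonneg fun i _ => sq_nonneg _
  have hwsum : ∑ j, v j * w j = ∑ j, v j * βs j - ∑ j, v j * β j := by
    rw [← Finset.sum_sub_distrib]
    exact Finset.sum_congr rfl (fun j _ => by simp [hw, mul_sub])
  have hrs : ∑ i, (y i - X.mulVec βs i)^2 = ∑ i, (r i)^2 :=
    Finset.sum_congr rfl (fun i _ => by simp [hr])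
  rw [hsq, key, hwsum, hsupp, hrs]
  nlinarith [mul_le_mul_of_nonneg_left hβbound hlam.le]
end

section
/- Let C(β) = (1/2)‖y − Xβ‖² + λ‖β‖₁ with λ > 0, β̂ a minimizer of C, β ∈ ℝ^p arbitrary, v ∈ ∂‖β‖₁, and sg = −Xᵀ(y − Xβ) + λv. Then ‖X(β̂ − β)‖² ≤ 2·‖sg‖·‖β̂ − β‖. -/
open Matrix

/-- Bound on the fit difference at an approximate stationary point:
`‖X(β̂ - β)‖² ≤ 2 ‖sg‖ ‖β̂ - β‖`. -/
theorem lasso_fit_difference_bound {n p : ℕ}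
    (X : Matrix (Fin n) (Fin p) ℝ) (y : Fin n → ℝ) (lam : ℝ) (hlam : 0 < lam)
    (βhat β v : Fin p → ℝ)
    (hmin : ∀ b : Fin p → ℝ,
      (1/2) * (∑ i, (y i - X.mulVec βhat i)^2) + lam * ∑ j, |βhat j| ≤
      (1/2) * (∑ i, (y i - X.mulVec b i)^2) + lam * ∑ j, |b j|)
    (hv : ∀ j, (β j ≠ 0 → v j = Real.sign (β j)) ∧ |v j| ≤ 1) :
    (∑ i, (X.mulVec (βhat - β) i)^2) ≤
      2 * Real.sqrt (∑ j, ((- Xᵀ.mulVec (y - X.mulVec β) + lam • v) j)^2) *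
        Real.sqrt (∑ j, (βhat j - β j)^2) := by
  set r : Fin p → ℝ := βhat - β with hr
  set sg : Fin p → ℝ := - Xᵀ.mulVec (y - X.mulVec β) + lam • v with hsg
  -- expansion of the quadratic part
  have hexp : ∀ i, (y i - X.mulVec βhat i)^2
      = (y i - X.mulVec β i)^2 - 2 * (y i - X.mulVec β i) * (X.mulVec r i)
        + (X.mulVec r i)^2 := by
    intro i
    have : X.mulVec βhat i = X.mulVec β i + X.mulVec r i := by
      have : X.mulVec r = X.mulVec βhat - X.mulVec β := by
        rw [hr, Matrix.mulVec_sub]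
      rw [this]; simp
    rw [this]; ring
  -- subgradient inequality per coordinate
  have hsub : ∀ j, |β j| + v j * r j ≤ |βhat j| := by
    intro j
    have h1 := (hv j).1
    have h2 := (hv j).2
    have hrj : βhat j = β j + r j := by simp [hr]
    rw [hrj]
    by_cases hb : β j = 0
    · rw [hb]
      simp only [abs_zero, zero_add]
      calc v j * r j ≤ |v j * r j| := le_abs_self _
        _ = |v j| * |r j| := abs_mul _ _
        _ ≤ 1 * |r j| := by
            apply mul_le_mul_of_nonneg_right h2 (abs_nonneg _)
        _ = |r j| := one_mul _
    · rw [h1 hb]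
      have hsb : Real.sign (β j) * β j = |β j| := by
        rcases lt_or_gt_of_ne hb with h | h
        · rw [Real.sign_of_neg h, abs_of_neg h]; ring
        · rw [Real.sign_of_pos h, abs_of_pos h]; ring
      have hs1 : |Real.sign (β j)| ≤ 1 := by
        rcases lt_or_gt_of_ne hb with h | h
        · rw [Real.sign_of_neg h]; simp
        · rw [Real.sign_of_pos h]; simp
      calc |β j| + Real.sign (β j) * r j = Real.sign (β j) * (β j + r j) := by
            rw [mul_add, hsb]
        _ ≤ |Real.sign (β j) * (β j + r j)| := le_abs_self _
        _ = |Real.sign (β j)| * |β j + r j| := abs_mul _ _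
        _ ≤ 1 * |β j + r j| := mul_le_mul_of_nonneg_right hs1 (abs_nonneg _)
        _ = |β j + r j| := one_mul _
  -- key inequality from minimality
  have hmin' := hmin β
  have hineq : (1/2) * (∑ i, (X.mulVec r i)^2)
      ≤ (∑ i, (y i - X.mulVec β i) * (X.mulVec r i)) - lam * ∑ j, v j * r j := by
    have hsum : ∑ i, (y i - X.mulVec βhat i)^2
        = ∑ i, (y i - X.mulVec β i)^2 - 2 * ∑ i, (y i - X.mulVec β i) * (X.mulVec r i)
          + ∑ i, (X.mulVec r i)^2 := by
      rw [Finset.mul_sum, ← Finset.sum_sub_distrib, ← Finset.sum_add_distrib]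
      exact Finset.sum_congr rfl fun i _ => by rw [hexp i]; ring
    have habs : lam * ∑ j, |β j| + lam * ∑ j, v j * r j ≤ lam * ∑ j, |βhat j| := by
      rw [← mul_add, ← Finset.sum_add_distrib]
      exact mul_le_mul_of_nonneg_left (Finset.sum_le_sum fun j _ => hsub j) hlam.le
    nlinarith [hmin', hsum, habs]
  -- transpose identity
  have htrans : ∑ i, (y i - X.mulVec β i) * (X.mulVec r i)
      = ∑ j, (Xᵀ.mulVec (y - X.mulVec β)) j * r j := by
    simp only [Matrix.mulVec, dotProduct, Matrix.transpose_apply, Pi.sub_apply,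
      Finset.sum_mul, Finset.mul_sum]
    rw [Finset.sum_comm]
    exact Finset.sum_congr rfl fun j _ => Finset.sum_congr rfl fun i _ => by ring
  -- combine: (1/2)‖Xr‖² ≤ ∑ (-sg) * r
  have hkey : (1/2) * (∑ i, (X.mulVec r i)^2) ≤ ∑ j, (- sg j) * r j := by
    refine hineq.trans_eq ?_
    rw [htrans, Finset.mul_sum, ← Finset.sum_sub_distrib]
    exact Finset.sum_congr rfl fun j _ => by simp [hsg]; ring
  -- Cauchy-Schwarz
  have hcs : ∑ j, (- sg j) * r j
      ≤ Real.sqrt (∑ j, sg j ^ 2) * Real.sqrt (∑ j, r j ^ 2) := by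
    have := Real.sum_mul_le_sqrt_mul_sqrt Finset.univ (fun j => - sg j) r
    simpa using this
  have hr2 : ∀ j, r j ^ 2 = (βhat j - β j) ^ 2 := fun j => by simp [hr]
  calc (∑ i, (X.mulVec (βhat - β) i)^2)
      = (∑ i, (X.mulVec r i)^2) := by rw [hr]
    _ ≤ 2 * (Real.sqrt (∑ j, sg j ^ 2) * Real.sqrt (∑ j, r j ^ 2)) := by
        linarith [hkey.trans hcs]
    _ = 2 * Real.sqrt (∑ j, ((- Xᵀ.mulVec (y - X.mulVec β) + lam • v) j)^2) *
        Real.sqrt (∑ j, (βhat j - β j)^2) := by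
        rw [← hsg]
        simp_rw [hr2]
        ring
end
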